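/- arXiv:1912.05871 — 2 statements merged into one kernel-verified Lean document; each statement's English description precedes it below -/
import Mathlib

section
/- Let k ≥ 1 and let a_1, a_2 be integers with 2 ≤ a_1 ≤ a_2. Then ξ^ce(K_k ∨ (K_{a_1} ∪ K_{a_2})) < ξ^ce(K_k ∨ (K_{a_1 - 1} ∪ K_{a_2 + 1})); indeed, ξ^ce(K_k ∨ (K_{a_1} ∪ K_{a_2})) - ξ^ce(K_k ∨ (K_{a_1 - 1} ∪ K_{a_2 + 1})) = a_1 - 1 - a_2. -/
open Finset
open scoped Classical

namespace CEI

variable {V : Type*}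

/-- Degree of a vertex. -/
noncomputable def deg [Fintype V] (G : SimpleGraph V) (v : V) : ℕ :=
  (Finset.univ.filter fun u => G.Adj v u).card

/-- Eccentricity of a vertex. -/
noncomputable def ecc [Fintype V] (G : SimpleGraph V) (v : V) : ℕ :=
  Finset.univ.sup fun u => G.dist v u

/-- Connective eccentricity index. -/
noncomputable def cei [Fintype V] (G : SimpleGraph V) : ℝ :=
  ∑ v : V, (deg G v : ℝ) / (ecc G v)

/-- Diameter. -/
noncomputable def diam [Fintype V] (G : SimpleGraph V) : ℕ :=
  Finset.univ.sup fun v => ecc G v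

/-- `G` is `k`-connected: removing fewer than `k` vertices leaves a
connected graph with more than one vertex. -/
def KConnected [Fintype V] (k : ℕ) (G : SimpleGraph V) : Prop :=
  ∀ A : Finset V, A.card < k →
    (G.induce ((A : Set V)ᶜ)).Connected ∧ 1 < ((A : Set V)ᶜ).ncard

/-- A set of pairwise non-adjacent vertices. -/
def IsIndepSet (G : SimpleGraph V) (s : Set V) : Prop :=
  s.Pairwise fun u v => ¬ G.Adj u v

/-- Independence number. -/
noncomputable def indepNum [Fintype V] (G : SimpleGraph V) : ℕ :=
  Finset.univ.sup fun s : Finset V => if IsIndepSet G ↑s then s.card else 0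

/-- A vertex cut: deleting `A` disconnects `G`. -/
def IsVertexCut (G : SimpleGraph V) (A : Finset V) : Prop :=
  ¬ (G.induce ((A : Set V)ᶜ)).Preconnected

/-- Sequential join of complete graphs with part sizes `cs`. -/
def seqCompleteJoin (cs : List ℕ) : SimpleGraph ((i : Fin cs.length) × Fin (cs.get i)) where
  Adj x y := x ≠ y ∧ (x.1.val = y.1.val ∨ x.1.val + 1 = y.1.val ∨ y.1.val + 1 = x.1.val)
  symm := ⟨fun x y ⟨h1, h2⟩ => ⟨h1.symm, by tauto⟩⟩
  loopless := ⟨fun x ⟨h, _⟩ => h rfl⟩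

/-- `K_k ∨ (K_a ∪ K_b)`. -/
def KJoin2 (k a b : ℕ) : SimpleGraph (Fin (k + a + b)) where
  Adj x y := x ≠ y ∧ (x.val < k ∨ y.val < k ∨ (x.val < k + a ↔ y.val < k + a))
  symm := ⟨fun x y ⟨h1, h2⟩ => ⟨h1.symm, by tauto⟩⟩
  loopless := ⟨fun x ⟨h, _⟩ => h rfl⟩

/-- `K_b ∨ a K_1`. -/
def splitGraph (b a : ℕ) : SimpleGraph (Fin (b + a)) where
  Adj x y := x ≠ y ∧ (x.val < b ∨ y.val < b)
  symm := ⟨fun x y ⟨h1, h2⟩ => ⟨h1.symm, by tauto⟩⟩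
  loopless := ⟨fun x ⟨h, _⟩ => h rfl⟩

/-- `S_{n,α} = K_k ∨ (K_1 ∪ (K_{n-k-α} ∨ (α-1)K_1))`; vertices `0,…,k-1` form the
clique `K_k` joined to everything, vertex `k` is the isolated-ish `K_1`, vertices
`k+1,…,n-α` form `K_{n-k-α}`, and vertices `n-α+1,…,n-1` are the `α-1` independent ones. -/
def Sgraph (n k a : ℕ) : SimpleGraph (Fin n) where
  Adj x y := x ≠ y ∧ (x.val < k ∨ y.val < k ∨
    (x.val ≠ k ∧ y.val ≠ k ∧ ¬(n + 1 - a ≤ x.val ∧ n + 1 - a ≤ y.val)))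
  symm := ⟨fun x y ⟨h1, h2⟩ => ⟨h1.symm, by tauto⟩⟩
  loopless := ⟨fun x ⟨h, _⟩ => h rfl⟩


lemma kjoin2_adj (k a b : ℕ) (x y : Fin (k + a + b)) :
    (KJoin2 k a b).Adj x y ↔
      x ≠ y ∧ (x.val < k ∨ y.val < k ∨ (x.val < k + a ↔ y.val < k + a)) := Iff.rfl

lemma card_filter_Ico (n p q : ℕ) (hq : q ≤ n) (hpq : p ≤ q) :
    ((univ : Finset (Fin n)).filter fun v => p ≤ v.val ∧ v.val < q).card = q - p := by
  have himg : ((univ : Finset (Fin n)).filter fun v => p ≤ v.val ∧ v.val < q)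
      = (univ : Finset (Fin (q - p))).image
          (fun i => (⟨p + i.val, by have := i.isLt; omega⟩ : Fin n)) := by
    ext u
    simp only [mem_filter, mem_univ, true_and, mem_image]
    constructor
    · rintro ⟨h1, h2⟩
      exact ⟨⟨u.val - p, by omega⟩, by ext; simp; omega⟩
    · rintro ⟨i, rfl⟩
      have := i.isLt
      simp; omega
  rw [himg, Finset.card_image_of_injective _ ?_, card_univ, Fintype.card_fin]
  intro i j hij
  have := congrArg Fin.val hij
  simp at this
  exact Fin.ext this

lemma card_filter_lt (n q : ℕ) (hq : q ≤ n) :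
    ((univ : Finset (Fin n)).filter fun v => v.val < q).card = q := by
  have h := card_filter_Ico n 0 q hq (Nat.zero_le q)
  simpa using h

lemma deg_eq (k a b : ℕ) (v : Fin (k + a + b)) :
    deg (KJoin2 k a b) v =
      if v.val < k then k + a + b - 1 else if v.val < k + a then k + a - 1 else k + b - 1 := by
  unfold deg
  split_ifs with h1 h2
  · have hset : (univ.filter fun u => (KJoin2 k a b).Adj v u) = univ.erase v := by
      ext u
      simp only [mem_filter, mem_univ, true_and, mem_erase, and_true, kjoin2_adj]
      exact ⟨fun h => h.1.symm, fun h => ⟨h.symm, Or.inl h1⟩⟩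
    rw [hset, Finset.card_erase_of_mem (mem_univ v), card_univ, Fintype.card_fin]
  · have hset : (univ.filter fun u => (KJoin2 k a b).Adj v u)
        = (univ.filter fun u : Fin (k+a+b) => u.val < k + a).erase v := by
      ext u
      simp only [mem_filter, mem_univ, true_and, mem_erase, kjoin2_adj]
      constructor
      · rintro ⟨hne, hc⟩
        exact ⟨hne.symm, by omega⟩
      · rintro ⟨hne, hu⟩
        exact ⟨hne.symm, by omega⟩
    rw [hset, Finset.card_erase_of_mem (by simp [h2]), card_filter_lt _ _ (by omega)]
  · have hset : (univ.filter fun u => (KJoin2 k a b).Adj v u)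
        = (univ.filter fun u : Fin (k+a+b) => ¬ (k ≤ u.val ∧ u.val < k + a)).erase v := by
      ext u
      simp only [mem_filter, mem_univ, true_and, mem_erase, kjoin2_adj]
      constructor
      · rintro ⟨hne, hc⟩
        exact ⟨hne.symm, by omega⟩
      · rintro ⟨hne, hu⟩
        exact ⟨hne.symm, by omega⟩
    have hcard : (univ.filter fun u : Fin (k+a+b) => ¬ (k ≤ u.val ∧ u.val < k + a)).card
        = k + b := by
      have h := Finset.card_filter_add_card_filter_not
        (s := (univ : Finset (Fin (k+a+b)))) (fun u : Fin (k+a+b) => k ≤ u.val ∧ u.val < k + a)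
      rw [card_filter_Ico _ k (k+a) (by omega) (by omega), card_univ, Fintype.card_fin] at h
      omega
    rw [hset, Finset.card_erase_of_mem (by simp only [mem_filter, mem_univ, true_and]; omega), hcard]


lemma dist_le_two (k a b : ℕ) (hk : 1 ≤ k) (v u : Fin (k + a + b)) :
    (KJoin2 k a b).dist v u ≤ 2 := by
  by_cases hvu : v = u
  · subst hvu; simp [SimpleGraph.dist_self]
  by_cases hadj : (KJoin2 k a b).Adj v u
  · rw [SimpleGraph.dist_eq_one_iff_adj.mpr hadj]; omega
  · have hn : 0 < k + a + b := by omega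
    set z : Fin (k + a + b) := ⟨0, hn⟩ with hz
    have hvz : v ≠ z := by
      intro h
      exact hadj ⟨hvu, Or.inl (by rw [h]; exact hk)⟩
    have huz : z ≠ u := by
      intro h
      exact hadj ⟨hvu, Or.inr (Or.inl (by rw [← h]; exact hk))⟩
    have h1 : (KJoin2 k a b).Adj v z := ⟨hvz, Or.inr (Or.inl hk)⟩
    have h2 : (KJoin2 k a b).Adj z u := ⟨huz, Or.inl hk⟩
    have hw : (KJoin2 k a b).dist v u ≤
        (SimpleGraph.Walk.cons h1 (SimpleGraph.Walk.cons h2 SimpleGraph.Walk.nil)).length :=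
      SimpleGraph.dist_le _
    simpa using hw

lemma dist_eq_two (k a b : ℕ) (hk : 1 ≤ k) (v u : Fin (k + a + b)) (hvu : v ≠ u)
    (hadj : ¬ (KJoin2 k a b).Adj v u) : (KJoin2 k a b).dist v u = 2 := by
  have hle := dist_le_two k a b hk v u
  have hn : 0 < k + a + b := by omega
  set z : Fin (k + a + b) := ⟨0, hn⟩ with hz
  have hvz : v ≠ z := by
    intro h
    exact hadj ⟨hvu, Or.inl (by rw [h]; exact hk)⟩
  have huz : z ≠ u := by
    intro h
    exact hadj ⟨hvu, Or.inr (Or.inl (by rw [← h]; exact hk))⟩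
  have h1 : (KJoin2 k a b).Adj v z := ⟨hvz, Or.inr (Or.inl hk)⟩
  have h2 : (KJoin2 k a b).Adj z u := ⟨huz, Or.inl hk⟩
  have hr : (KJoin2 k a b).Reachable v u :=
    ⟨SimpleGraph.Walk.cons h1 (SimpleGraph.Walk.cons h2 SimpleGraph.Walk.nil)⟩
  have hpos : 0 < (KJoin2 k a b).dist v u := hr.pos_dist_of_ne hvu
  have hne1 : (KJoin2 k a b).dist v u ≠ 1 := fun h =>
    hadj (SimpleGraph.dist_eq_one_iff_adj.mp h)
  omega

lemma ecc_eq (k a b : ℕ) (hk : 1 ≤ k) (ha : 1 ≤ a) (hb : 1 ≤ b) (v : Fin (k + a + b)) :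
    ecc (KJoin2 k a b) v = if v.val < k then 1 else 2 := by
  unfold ecc
  split_ifs with h1
  · apply le_antisymm
    · apply Finset.sup_le
      intro u _
      by_cases hvu : v = u
      · subst hvu; simp [SimpleGraph.dist_self]
      · have hadj : (KJoin2 k a b).Adj v u := ⟨hvu, Or.inl h1⟩
        exact le_of_eq (SimpleGraph.dist_eq_one_iff_adj.mpr hadj)
    · have hu : k < k + a + b := by omega
      set u : Fin (k + a + b) := ⟨k, hu⟩ with hudef
      have hvu : v ≠ u := by
        intro h
        rw [h] at h1
        exact absurd h1 (by simp [hudef])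
      have : (KJoin2 k a b).dist v u = 1 :=
        SimpleGraph.dist_eq_one_iff_adj.mpr ⟨hvu, Or.inl h1⟩
      calc 1 = (KJoin2 k a b).dist v u := this.symm
        _ ≤ _ := Finset.le_sup (mem_univ u)
  · apply le_antisymm
    · exact Finset.sup_le fun u _ => dist_le_two k a b hk v u
    · by_cases h2 : v.val < k + a
      · have hu : k + a < k + a + b := by omega
        set u : Fin (k + a + b) := ⟨k + a, hu⟩ with hudef
        have hvu : v ≠ u := by
          intro h; rw [h] at h2; simp [hudef] at h2
        have hadj : ¬ (KJoin2 k a b).Adj v u := by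
          rintro ⟨-, hc⟩
          simp only [hudef] at hc
          omega
        have hd := dist_eq_two k a b hk v u hvu hadj
        calc 2 = (KJoin2 k a b).dist v u := hd.symm
          _ ≤ _ := Finset.le_sup (mem_univ u)
      · have hu : k ≤ v.val := by omega
        have hku : k < k + a + b := by omega
        set u : Fin (k + a + b) := ⟨k, hku⟩ with hudef
        have hvu : v ≠ u := by
          intro h; rw [h] at h2; simp [hudef] at h2; omega
        have hadj : ¬ (KJoin2 k a b).Adj v u := by
          rintro ⟨-, hc⟩
          simp only [hudef] at hc
          omega
        have hd := dist_eq_two k a b hk v u hvu hadj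
        calc 2 = (KJoin2 k a b).dist v u := hd.symm
          _ ≤ _ := Finset.le_sup (mem_univ u)


lemma cei_formula (k a b : ℕ) (hk : 1 ≤ k) (ha : 1 ≤ a) (hb : 1 ≤ b) :
    cei (KJoin2 k a b) =
      k * ((k : ℝ) + a + b - 1) + a * ((k : ℝ) + a - 1) / 2 + b * ((k : ℝ) + b - 1) / 2 := by
  unfold cei
  rw [← Finset.sum_filter_add_sum_filter_not univ (fun v : Fin (k+a+b) => v.val < k),
    ← Finset.sum_filter_add_sum_filter_not
      ((univ : Finset (Fin (k+a+b))).filter fun v => ¬ v.val < k)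
      (fun v : Fin (k+a+b) => v.val < k + a)]
  have e1 : ∑ v ∈ (univ : Finset (Fin (k+a+b))).filter (fun v => v.val < k),
      ((deg (KJoin2 k a b) v : ℝ) / (ecc (KJoin2 k a b) v))
      = ∑ _v ∈ (univ : Finset (Fin (k+a+b))).filter (fun v => v.val < k),
        (((k + a + b - 1 : ℕ) : ℝ) / ((1 : ℕ) : ℝ)) := by
    apply Finset.sum_congr rfl
    intro v hv
    simp only [mem_filter, mem_univ, true_and] at hv
    rw [deg_eq, ecc_eq k a b hk ha hb, if_pos hv, if_pos hv]
  have e2 : ∑ v ∈ ((univ : Finset (Fin (k+a+b))).filter fun v => ¬ v.val < k).filter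
        (fun v => v.val < k + a),
      ((deg (KJoin2 k a b) v : ℝ) / (ecc (KJoin2 k a b) v))
      = ∑ _v ∈ ((univ : Finset (Fin (k+a+b))).filter fun v => ¬ v.val < k).filter
        (fun v => v.val < k + a),
        (((k + a - 1 : ℕ) : ℝ) / ((2 : ℕ) : ℝ)) := by
    apply Finset.sum_congr rfl
    intro v hv
    simp only [mem_filter, mem_univ, true_and] at hv
    rw [deg_eq, ecc_eq k a b hk ha hb, if_neg hv.1, if_pos hv.2, if_neg hv.1]
  have e3 : ∑ v ∈ ((univ : Finset (Fin (k+a+b))).filter fun v => ¬ v.val < k).filter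
        (fun v => ¬ v.val < k + a),
      ((deg (KJoin2 k a b) v : ℝ) / (ecc (KJoin2 k a b) v))
      = ∑ _v ∈ ((univ : Finset (Fin (k+a+b))).filter fun v => ¬ v.val < k).filter
        (fun v => ¬ v.val < k + a),
        (((k + b - 1 : ℕ) : ℝ) / ((2 : ℕ) : ℝ)) := by
    apply Finset.sum_congr rfl
    intro v hv
    simp only [mem_filter, mem_univ, true_and] at hv
    rw [deg_eq, ecc_eq k a b hk ha hb, if_neg hv.1, if_neg hv.2, if_neg hv.1]
  rw [e1, e2, e3, Finset.sum_const, Finset.sum_const, Finset.sum_const]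
  have c1 : ((univ : Finset (Fin (k+a+b))).filter (fun v => v.val < k)).card = k :=
    card_filter_lt _ _ (by omega)
  have c2 : (((univ : Finset (Fin (k+a+b))).filter fun v => ¬ v.val < k).filter
      (fun v => v.val < k + a)).card = a := by
    have hset : ((univ : Finset (Fin (k+a+b))).filter fun v => ¬ v.val < k).filter
        (fun v => v.val < k + a)
        = (univ : Finset (Fin (k+a+b))).filter (fun v => k ≤ v.val ∧ v.val < k + a) := by
      ext v
      simp only [mem_filter, mem_univ, true_and]
      omega
    rw [hset, card_filter_Ico _ k (k+a) (by omega) (by omega)]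
    omega
  have c3 : (((univ : Finset (Fin (k+a+b))).filter fun v => ¬ v.val < k).filter
      (fun v => ¬ v.val < k + a)).card = b := by
    have hset : ((univ : Finset (Fin (k+a+b))).filter fun v => ¬ v.val < k).filter
        (fun v => ¬ v.val < k + a)
        = (univ : Finset (Fin (k+a+b))).filter (fun v => k + a ≤ v.val ∧ v.val < k + a + b) := by
      ext v
      have hv := v.isLt
      simp only [mem_filter, mem_univ, true_and]
      omega
    rw [hset, card_filter_Ico _ (k+a) (k+a+b) (by omega) (by omega)]
    omega
  rw [c1, c2, c3]
  have hc1 : ((k + a + b - 1 : ℕ) : ℝ) = (k : ℝ) + a + b - 1 := by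
    push_cast [Nat.cast_sub (by omega : 1 ≤ k + a + b)]; ring
  have hc2 : ((k + a - 1 : ℕ) : ℝ) = (k : ℝ) + a - 1 := by
    push_cast [Nat.cast_sub (by omega : 1 ≤ k + a)]; ring
  have hc3 : ((k + b - 1 : ℕ) : ℝ) = (k : ℝ) + b - 1 := by
    push_cast [Nat.cast_sub (by omega : 1 ≤ k + b)]; ring
  rw [nsmul_eq_mul, nsmul_eq_mul, nsmul_eq_mul, hc1, hc2, hc3]
  push_cast
  ring


/-- for `2 ≤ a₁ ≤ a₂`,
`ξ^ce(K_k ∨ (K_{a₁} ∪ K_{a₂})) < ξ^ce(K_k ∨ (K_{a₁-1} ∪ K_{a₂+1}))`, and the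
difference equals `a₁ - 1 - a₂`. -/
theorem cei_KJoin2_shift (k a₁ a₂ : ℕ) (hk : 1 ≤ k) (h1 : 2 ≤ a₁) (h12 : a₁ ≤ a₂) :
    cei (KJoin2 k a₁ a₂) < cei (KJoin2 k (a₁ - 1) (a₂ + 1)) ∧
    cei (KJoin2 k a₁ a₂) - cei (KJoin2 k (a₁ - 1) (a₂ + 1)) =
      (a₁ : ℝ) - 1 - (a₂ : ℝ) := by
  have f1 := cei_formula k a₁ a₂ hk (by omega) (by omega)
  have f2 := cei_formula k (a₁ - 1) (a₂ + 1) hk (by omega) (by omega)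
  have hcast : ((a₁ - 1 : ℕ) : ℝ) = (a₁ : ℝ) - 1 := by
    push_cast [Nat.cast_sub (by omega : 1 ≤ a₁)]; ring
  rw [hcast] at f2
  have heq : cei (KJoin2 k a₁ a₂) - cei (KJoin2 k (a₁ - 1) (a₂ + 1)) =
      (a₁ : ℝ) - 1 - (a₂ : ℝ) := by
    rw [f1, f2]; push_cast; ring
  refine ⟨?_, heq⟩
  have ha : (a₁ : ℝ) ≤ (a₂ : ℝ) := by exact_mod_cast h12
  linarith [heq]

end CEI
end

section
/- Let k ≥ 1 and α ≥ 2 with k + α + 1 ≤ n, let G attain the maximum connective eccentricity index among all k-connected graphs of order n with independence number α, let I be a maximum independent set of G, let A be a vertex cut with |A| = k, and let G_1, G_2 be the two components of G - A with G_2 consisting of a single vertex. Then the vertex of G_2 belongs to I. -/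
open Finset
open scoped Classical

namespace CEI

variable {V : Type*}

/-- with `G` extremal as in Statement 10, `I` a maximum
independent set, `A` a vertex cut of size `k`, and the two components of `G - A`
being `G₁` and the single-vertex component `G₂ = {w}`, the vertex `w` belongs to
`I`. -/
theorem trivial_component_in_indep {V : Type} [Fintype V] (G : SimpleGraph V)
    (n k a : ℕ) (hk : 1 ≤ k) (ha : 2 ≤ a) (hn : k + a + 1 ≤ n)
    (hcard : Fintype.card V = n) (hconn : KConnected k G) (hindep : indepNum G = a)
    (hmax : ∀ (W : Type) [Fintype W] (H : SimpleGraph W),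
      Fintype.card W = n → KConnected k H → indepNum H = a → cei H ≤ cei G)
    (I : Set V) (hI : IsIndepSet G I) (hIcard : I.ncard = a)
    (A : Finset V) (hA : IsVertexCut G A) (hAcard : A.card = k)
    (c₁ c₂ : (G.induce ((A : Set V)ᶜ)).ConnectedComponent) (hne : c₁ ≠ c₂)
    (hall : ∀ c, c = c₁ ∨ c = c₂)
    (w : ((A : Set V)ᶜ : Set V)) (hw : c₂.supp = {w}) :
    (w : V) ∈ I := by
  classical
  by_contra hwI
  -- G is connected
  have hGconn : G.Connected := by
    have h := (hconn ∅ (by simp only [Finset.card_empty]; omega)).1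
    have he : (((∅ : Finset V) : Set V)ᶜ) = Set.univ := by simp
    rw [he] at h
    exact (SimpleGraph.Iso.connected_iff G.induceUnivIso).mp h
  have hwA : (w : V) ∉ A := fun h => w.2 (Finset.mem_coe.mpr h)
  -- neighbors of w lie in A
  have hnbr : ∀ x : V, G.Adj (w : V) x → x ∈ A := by
    intro x hx
    by_contra hxA
    have hx' : x ∈ ((A : Set V)ᶜ) := hxA
    have hadj : (G.induce ((A : Set V)ᶜ)).Adj w ⟨x, hx'⟩ := by
      simpa using hx
    have hwc : (G.induce ((A : Set V)ᶜ)).connectedComponentMk w = c₂ := by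
      have : w ∈ c₂.supp := by rw [hw]; rfl
      exact (SimpleGraph.ConnectedComponent.mem_supp_iff _ _).mp this
    have hxc : (⟨x, hx'⟩ : ((A : Set V)ᶜ : Set V)) ∈ c₂.supp := by
      rw [SimpleGraph.ConnectedComponent.mem_supp_iff, ← hwc]
      exact SimpleGraph.ConnectedComponent.sound hadj.symm.reachable
    rw [hw] at hxc
    have : (⟨x, hx'⟩ : ((A : Set V)ᶜ : Set V)) = w := hxc
    exact G.irrefl (by rwa [← this] at hx)
  -- choose a vertex u outside A ∪ {w}
  have hcard4 : 4 ≤ Fintype.card V := by omega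
  obtain ⟨u, hu⟩ : ∃ u : V, u ∉ insert (w : V) A := by
    by_contra hno
    push_neg at hno
    have : (Finset.univ : Finset V) ⊆ insert (w : V) A := fun x _ => hno x
    have := Finset.card_le_card this
    rw [Finset.card_univ, hcard] at this
    have := Finset.card_insert_le (w : V) A
    omega
  have huA : u ∉ A := fun h => hu (Finset.mem_insert_of_mem h)
  have huw : u ≠ (w : V) := fun h => hu (h ▸ Finset.mem_insert_self _ _)
  have hadjwu : ¬ G.Adj (w : V) u := fun h => huA (hnbr u h)
  -- the new graph
  set H : SimpleGraph V := G ⊔ SimpleGraph.edge (w : V) u with hHdef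
  have hle : G ≤ H := le_sup_left
  have hHwu : H.Adj (w : V) u := by
    refine Or.inr ?_
    rw [SimpleGraph.edge_adj]
    exact ⟨Or.inl ⟨rfl, rfl⟩, huw.symm⟩
  -- H is k-connected
  have hKH : KConnected k H := by
    intro B hB
    obtain ⟨hc, hn⟩ := hconn B hB
    refine ⟨hc.mono ?_, hn⟩
    intro x y hxy
    exact hle hxy
  -- independence number of H is a
  have hIH : IsIndepSet H I := by
    intro x hx y hy hxy hadj
    rcases hadj with h | h
    · exact hI hx hy hxy h
    · rw [SimpleGraph.edge_adj] at h
      rcases h.1 with ⟨h1, h2⟩ | ⟨h1, h2⟩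
      · exact hwI (h1 ▸ hx)
      · exact hwI (h2 ▸ hy)
  have hindepH : indepNum H = a := by
    have h1 : indepNum H ≤ a := by
      rw [← hindep]
      apply Finset.sup_mono_fun
      intro s _
      by_cases h : IsIndepSet H ↑s
      · have hg : IsIndepSet G ↑s := fun x hx y hy hxy hadj => h hx hy hxy (hle hadj)
        simp [h, hg]
      · simp [h]
    have h2 : a ≤ indepNum H := by
      have hIf : I.toFinset.card = a := by rw [← Set.ncard_eq_toFinset_card', hIcard]
      have hIi : IsIndepSet H ↑(I.toFinset) := by rwa [Set.coe_toFinset]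
      have := Finset.le_sup (f := fun s : Finset V => if IsIndepSet H ↑s then s.card else 0)
        (Finset.mem_univ I.toFinset)
      simpa [hIi, hIH, hIf, indepNum] using this
    omega
  -- cei comparison
  have hHconn : H.Connected := hGconn.mono hle
  have hecc_posH : ∀ v : V, 0 < ecc H v := by
    intro v
    obtain ⟨v', hv'⟩ := Fintype.exists_ne_of_one_lt_card (by omega) v
    have h1 : 0 < H.dist v v' := hHconn.pos_dist_of_ne (Ne.symm hv')
    exact lt_of_lt_of_le h1 (Finset.le_sup (Finset.mem_univ v'))
  have hecc_le : ∀ v : V, ecc H v ≤ ecc G v := by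
    intro v
    apply Finset.sup_mono_fun
    intro x _
    exact (hGconn.preconnected v x).dist_anti hle
  have hdeg_le : ∀ v : V, deg G v ≤ deg H v := by
    intro v
    apply Finset.card_le_card
    intro x hx
    simp only [Finset.mem_filter] at hx ⊢
    exact ⟨hx.1, hle hx.2⟩
  have hdegw : deg G (w : V) < deg H (w : V) := by
    apply Finset.card_lt_card
    constructor
    · intro x hx
      simp only [Finset.mem_filter] at hx ⊢
      exact ⟨hx.1, hle hx.2⟩
    · intro hsub
      have : u ∈ Finset.univ.filter fun x => G.Adj (w : V) x := by
        apply hsub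
        simp only [Finset.mem_filter]
        exact ⟨Finset.mem_univ _, hHwu⟩
      simp only [Finset.mem_filter] at this
      exact hadjwu this.2
  have hlt : cei G < cei H := by
    have hterm : ∀ v ∈ (Finset.univ : Finset V),
        (deg G v : ℝ) / (ecc G v) ≤ (deg H v : ℝ) / (ecc H v) := by
      intro v _
      have h1 : (0:ℝ) < (ecc H v : ℝ) := by exact_mod_cast hecc_posH v
      have h2 : (ecc H v : ℝ) ≤ (ecc G v : ℝ) := by exact_mod_cast hecc_le v
      have h3 : (deg G v : ℝ) ≤ (deg H v : ℝ) := by exact_mod_cast hdeg_le v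
      gcongr
    refine Finset.sum_lt_sum hterm ⟨(w : V), Finset.mem_univ _, ?_⟩
    have h1 : (0:ℝ) < (ecc H (w:V) : ℝ) := by exact_mod_cast hecc_posH (w:V)
    have h2 : (ecc H (w:V) : ℝ) ≤ (ecc G (w:V) : ℝ) := by exact_mod_cast hecc_le (w:V)
    have h3 : (deg G (w:V) : ℝ) < (deg H (w:V) : ℝ) := by exact_mod_cast hdegw
    calc (deg G (w:V) : ℝ) / (ecc G (w:V)) ≤ (deg G (w:V) : ℝ) / (ecc H (w:V)) := by
          gcongr
      _ < (deg H (w:V) : ℝ) / (ecc H (w:V)) := by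
          exact div_lt_div_of_pos_right h3 h1
  have := hmax V H hcard hKH hindepH
  linarith
end CEI
end
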